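/- Let n ≥ 1 and let G be the fat fan of order n with base xyz, with apex y' and path vertices v_1, …, v_n. Let L be a list assignment with |L(y')| = 5 and 3 ≤ |L(v_i)| ≤ 5 for 1 ≤ i ≤ n. If a precoloring φ of the base xyz does not extend to an L-coloring of G, then {φ(x)} = L(v_1) \ L(v_n), {φ(z)} = L(v_n) \ L(v_1), and {φ(y)} = L(y') \ (L(v_1) ∪ L(v_n)). In particular, there exists at most one precoloring of xyz that does not extend to an L-coloring of G. -/

import Mathlib

/-- Vertices of the fat fan of order `n`: the base `x, y, z`, the apex `y'`,
and the path vertices `v 0, …, v (n-1)` (written `v_1, …, v_n` in the paper). -/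
inductive FFVert (n : ℕ) : Type where
  | x | y | z | apex
  | v (i : Fin n)
deriving DecidableEq

/-- The fat fan of order `n` with base `x y z` and apex `y'`. -/
def fatFan (n : ℕ) : SimpleGraph (FFVert n) :=
  SimpleGraph.fromEdgeSet (
    {s(FFVert.x, FFVert.y), s(FFVert.y, FFVert.z),
     s(FFVert.x, FFVert.apex), s(FFVert.y, FFVert.apex), s(FFVert.z, FFVert.apex)} ∪
    {e | ∃ i : Fin n, e = s(FFVert.apex, FFVert.v i)} ∪
    {e | ∃ i : Fin n, (i : ℕ) = 0 ∧ e = s(FFVert.x, FFVert.v i)} ∪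
    {e | ∃ i j : Fin n, (i : ℕ) + 1 = (j : ℕ) ∧ e = s(FFVert.v i, FFVert.v j)} ∪
    {e | ∃ i : Fin n, (i : ℕ) = n - 1 ∧ e = s(FFVert.v i, FFVert.z)})

/-- The precoloring of the base `x y z` by the colors `cx, cy, cz` extends to
an `L`-coloring of the fat fan of order `n`. -/
def ExtendsFF {n : ℕ} {α : Type*} (L : FFVert n → Finset α) (cx cy cz : α) : Prop :=
  ∃ ψ : FFVert n → α,
    (∀ u w : FFVert n, (fatFan n).Adj u w → ψ u ≠ ψ w) ∧
    ψ FFVert.x = cx ∧ ψ FFVert.y = cy ∧ ψ FFVert.z = cz ∧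
    (∀ w : FFVert n, w ≠ FFVert.x → w ≠ FFVert.y → w ≠ FFVert.z → ψ w ∈ L w)

/-- greedy coloring of a "chain" of lists -/
private lemma ff_chain {α : Type*} [DecidableEq α] (ℓ : ℕ → Finset α)
    (h0 : (ℓ 0).Nonempty) :
    ∀ n : ℕ, (∀ i, 1 ≤ i → i < n → 2 ≤ (ℓ i).card) →
      ∃ g : ℕ → α, (∀ i, i < n → g i ∈ ℓ i) ∧ (∀ i, i + 1 < n → g i ≠ g (i + 1)) := by
  intro n
  induction n with
  | zero =>
    intro _
    exact ⟨fun _ => h0.choose, fun i hi => absurd hi (by omega),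
      fun i hi => absurd hi (by omega)⟩
  | succ m ih =>
    intro hstep
    obtain ⟨g, hg, hadj⟩ := ih (fun i h1 h2 => hstep i h1 (by omega))
    rcases Nat.eq_zero_or_pos m with rfl | hm
    · refine ⟨fun _ => h0.choose, ?_, fun i hi => absurd hi (by omega)⟩
      intro i hi
      have hi0 : i = 0 := by omega
      subst hi0
      exact h0.choose_spec
    · have h2 : 1 < (ℓ m).card := hstep m hm (by omega)
      obtain ⟨b, hb, hbne⟩ := Finset.exists_mem_ne h2 (g (m - 1))
      refine ⟨fun j => if j = m then b else g j, ?_, ?_⟩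
      · intro i hi
        by_cases h : i = m
        · subst h; simpa using hb
        · simpa [h] using hg i (by omega)
      · intro i hi
        by_cases h : i + 1 = m
        · have hi0 : i ≠ m := by omega
          simp only [if_neg hi0, if_pos h]
          have he : i = m - 1 := by omega
          subst he
          exact fun hc => hbne hc.symm
        · have h1 : i ≠ m := by omega
          simp only [if_neg h1, if_neg h]
          exact hadj i (by omega)

private def ffColor {n : ℕ} {α : Type*} (cx cy cz c' : α) (g : ℕ → α) : FFVert n → α
  | .x => cx
  | .y => cy
  | .z => cz
  | .apex => c'
  | .v i => g i

/-- build an extension from apex color and path coloring -/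
private lemma ff_build {n : ℕ} {α : Type*} [DecidableEq α]
    (L : FFVert n → Finset α) (cx cy cz c' : α) (hxy : cx ≠ cy) (hyz : cy ≠ cz)
    (hcm : c' ∈ L FFVert.apex) (hcx : c' ≠ cx) (hcy : c' ≠ cy) (hcz : c' ≠ cz)
    (g : ℕ → α)
    (hg : ∀ (i : ℕ) (h : i < n), g i ∈ L (FFVert.v ⟨i, h⟩))
    (hgc : ∀ i, i < n → g i ≠ c')
    (hg0 : g 0 ≠ cx) (hgn : g (n - 1) ≠ cz)
    (hadj : ∀ i, i + 1 < n → g i ≠ g (i + 1)) :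
    ExtendsFF L cx cy cz := by
  refine ⟨ffColor cx cy cz c' g, ?_, rfl, rfl, rfl, ?_⟩
  · intro u w h
    rw [fatFan, SimpleGraph.fromEdgeSet_adj] at h
    obtain ⟨hm, hne⟩ := h
    simp only [Set.mem_union, Set.mem_insert_iff, Set.mem_setOf_eq,
      Set.mem_singleton_iff] at hm
    rcases hm with ((((h | h | h | h | h) | ⟨i, h⟩) | ⟨i, hi, h⟩) | ⟨i, j, hij, h⟩) | ⟨i, hi, h⟩ <;>
      rcases Sym2.eq_iff.1 h with ⟨rfl, rfl⟩ | ⟨rfl, rfl⟩ <;>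
      first
      | exact hxy | exact fun e => hxy e.symm
      | exact hyz | exact fun e => hyz e.symm
      | exact hcx | exact fun e => hcx e.symm
      | exact hcy | exact fun e => hcy e.symm
      | exact hcz | exact fun e => hcz e.symm
      | exact hgc _ i.isLt | exact fun e => hgc _ i.isLt e.symm
      | exact (show cx ≠ g i.1 from by rw [hi]; exact fun e => hg0 e.symm)
      | exact (show g i.1 ≠ cx from by rw [hi]; exact hg0)
      | exact (show g i.1 ≠ cz from by rw [hi]; exact hgn)
      | exact (show cz ≠ g i.1 from by rw [hi]; exact fun e => hgn e.symm)
      | exact (show g i.1 ≠ g j.1 from by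
          rw [← hij]; exact hadj _ (by rw [hij]; exact j.isLt))
      | exact (show g j.1 ≠ g i.1 from by
          rw [← hij]; exact fun e => hadj _ (by rw [hij]; exact j.isLt) e.symm)
  · intro w h1 h2 h3
    cases w with
    | x => exact absurd rfl h1
    | y => exact absurd rfl h2
    | z => exact absurd rfl h3
    | apex => exact hcm
    | v i => exact hg i.1 i.2


/-- extend when last path list minus {cz,c'} is large -/
private lemma ff_extend_last {n : ℕ} {α : Type*} [DecidableEq α] (hn : 2 ≤ n)
    (L : FFVert n → Finset α) (hlist : ∀ i : Fin n, 3 ≤ (L (FFVert.v i)).card)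
    (cx cy cz c' : α) (hxy : cx ≠ cy) (hyz : cy ≠ cz)
    (hcm : c' ∈ L FFVert.apex) (hcx : c' ≠ cx) (hcy : c' ≠ cy) (hcz : c' ≠ cz)
    (hcard : 2 ≤ ((L (FFVert.v ⟨n - 1, by omega⟩)) \ {cz, c'}).card) :
    ExtendsFF L cx cy cz := by
  classical
  have h0n : (0 : ℕ) < n := by omega
  have h1n : n - 1 < n := by omega
  set ℓ : ℕ → Finset α := fun i =>
    if h : i < n then
      L (FFVert.v ⟨i, h⟩) \
        ((if i = 0 then {cx} else ∅) ∪ (if i = n - 1 then {cz} else ∅) ∪ {c'})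
    else ∅ with hℓ
  have h0 : (ℓ 0).Nonempty := by
    rw [hℓ]
    simp only [dif_pos h0n, if_pos rfl, if_neg (by omega : ¬ (0 : ℕ) = n - 1)]
    have hsub : (({cx} ∪ ∅ ∪ {c'} : Finset α)).card ≤ 2 := by
      refine le_trans (Finset.card_union_le _ _) ?_
      have h1 : (({cx} ∪ ∅ : Finset α)).card ≤ 1 := by simp
      have h2 : (({c'} : Finset α)).card ≤ 1 := by simp
      omega
    have hd := Finset.le_card_sdiff ({cx} ∪ ∅ ∪ {c'}) (L (FFVert.v ⟨0, h0n⟩))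
    have h3 := hlist ⟨0, h0n⟩
    have hpos : 0 < ((L (FFVert.v ⟨0, h0n⟩)) \ ({cx} ∪ ∅ ∪ {c'})).card := by omega
    exact Finset.card_pos.1 hpos
  have hstep : ∀ i, 1 ≤ i → i < n → 2 ≤ (ℓ i).card := by
    intro i h1 h2
    rw [hℓ]
    simp only [dif_pos h2, if_neg (by omega : ¬ i = 0)]
    by_cases hlast : i = n - 1
    · subst hlast
      rw [if_pos rfl]
      have he : (∅ ∪ {cz} ∪ {c'} : Finset α) = {cz, c'} := by
        rw [Finset.empty_union, ← Finset.insert_eq]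
      rw [he]
      exact hcard
    · rw [if_neg hlast]
      have hsub : ((∅ ∪ ∅ ∪ {c'} : Finset α)).card ≤ 1 := by simp
      have hd := Finset.le_card_sdiff (∅ ∪ ∅ ∪ {c'}) (L (FFVert.v ⟨i, h2⟩))
      have h3 := hlist ⟨i, h2⟩
      have : 2 ≤ ((L (FFVert.v ⟨i, h2⟩)) \ (∅ ∪ ∅ ∪ {c'})).card := by omega
      exact this
  obtain ⟨g, hg, hadj⟩ := ff_chain ℓ h0 n hstep
  have hmem : ∀ (i : ℕ) (h : i < n),
      g i ∈ L (FFVert.v ⟨i, h⟩) ∧ g i ≠ c' ∧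
      (i = 0 → g i ≠ cx) ∧ (i = n - 1 → g i ≠ cz) := by
    intro i h
    have hgi := hg i h
    rw [hℓ] at hgi
    simp only [dif_pos h] at hgi
    rw [Finset.mem_sdiff] at hgi
    obtain ⟨m1, m2⟩ := hgi
    refine ⟨m1, ?_, ?_, ?_⟩
    · intro hc
      exact m2 (Finset.mem_union_right _ (Finset.mem_singleton.2 hc))
    · intro h0' hcx'
      subst h0'
      refine m2 (Finset.mem_union_left _ (Finset.mem_union_left _ ?_))
      rw [if_pos rfl]
      exact Finset.mem_singleton.2 hcx'
    · intro hl hcz'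
      subst hl
      refine m2 (Finset.mem_union_left _ (Finset.mem_union_right _ ?_))
      rw [if_pos rfl]
      exact Finset.mem_singleton.2 hcz'
  refine ff_build L cx cy cz c' hxy hyz hcm hcx hcy hcz g
    (fun i h => (hmem i h).1) (fun i h => (hmem i h).2.1)
    ((hmem 0 h0n).2.2.1 rfl) ((hmem (n - 1) h1n).2.2.2 rfl) hadj

/-- extend when first path list minus {cx,c'} is large -/
private lemma ff_extend_first {n : ℕ} {α : Type*} [DecidableEq α] (hn : 2 ≤ n)
    (L : FFVert n → Finset α) (hlist : ∀ i : Fin n, 3 ≤ (L (FFVert.v i)).card)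
    (cx cy cz c' : α) (hxy : cx ≠ cy) (hyz : cy ≠ cz)
    (hcm : c' ∈ L FFVert.apex) (hcx : c' ≠ cx) (hcy : c' ≠ cy) (hcz : c' ≠ cz)
    (hcard : 2 ≤ ((L (FFVert.v ⟨0, by omega⟩)) \ {cx, c'}).card) :
    ExtendsFF L cx cy cz := by
  classical
  have h0n : (0 : ℕ) < n := by omega
  have h1n : n - 1 < n := by omega
  set ℓ : ℕ → Finset α := fun j =>
    if h : n - 1 - j < n then
      L (FFVert.v ⟨n - 1 - j, h⟩) \
        ((if n - 1 - j = 0 then {cx} else ∅) ∪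
          (if n - 1 - j = n - 1 then {cz} else ∅) ∪ {c'})
    else ∅ with hℓ
  have h0 : (ℓ 0).Nonempty := by
    rw [hℓ]
    simp only [Nat.sub_zero, dif_pos h1n, if_pos rfl,
      if_neg (by omega : ¬ n - 1 = 0)]
    have hsub : ((∅ ∪ {cz} ∪ {c'} : Finset α)).card ≤ 2 := by
      refine le_trans (Finset.card_union_le _ _) ?_
      have h1 : ((∅ ∪ {cz} : Finset α)).card ≤ 1 := by simp
      have h2 : (({c'} : Finset α)).card ≤ 1 := by simp
      omega
    have hd := Finset.le_card_sdiff (∅ ∪ {cz} ∪ {c'}) (L (FFVert.v ⟨n - 1, h1n⟩))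
    have h3 := hlist ⟨n - 1, h1n⟩
    have hpos : 0 < ((L (FFVert.v ⟨n - 1, h1n⟩)) \ (∅ ∪ {cz} ∪ {c'})).card := by omega
    exact Finset.card_pos.1 hpos
  have hstep : ∀ j, 1 ≤ j → j < n → 2 ≤ (ℓ j).card := by
    intro j h1 h2
    rw [hℓ]
    have hjn : n - 1 - j < n := by omega
    have hnotlast : ¬ n - 1 - j = n - 1 := by omega
    simp only [dif_pos hjn, if_neg hnotlast]
    by_cases hfirst : n - 1 - j = 0
    · rw [if_pos hfirst]
      have hfin : (⟨n - 1 - j, hjn⟩ : Fin n) = ⟨0, h0n⟩ := Fin.mk_eq_mk.mpr hfirst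
      rw [hfin]
      have he : ({cx} ∪ ∅ ∪ {c'} : Finset α) = {cx, c'} := by
        rw [Finset.union_empty, ← Finset.insert_eq]
      rw [he]
      exact hcard
    · rw [if_neg hfirst]
      have hsub : ((∅ ∪ ∅ ∪ {c'} : Finset α)).card ≤ 1 := by simp
      have hd := Finset.le_card_sdiff (∅ ∪ ∅ ∪ {c'}) (L (FFVert.v ⟨n - 1 - j, hjn⟩))
      have h3 := hlist ⟨n - 1 - j, hjn⟩
      have : 2 ≤ ((L (FFVert.v ⟨n - 1 - j, hjn⟩)) \ (∅ ∪ ∅ ∪ {c'})).card := by omega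
      exact this
  obtain ⟨g', hg', hadj'⟩ := ff_chain ℓ h0 n hstep
  have hmem : ∀ (k : ℕ) (hk : k < n),
      g' (n - 1 - k) ∈ L (FFVert.v ⟨k, hk⟩) ∧ g' (n - 1 - k) ≠ c' ∧
      (k = 0 → g' (n - 1 - k) ≠ cx) ∧ (k = n - 1 → g' (n - 1 - k) ≠ cz) := by
    intro k hk
    have hj : n - 1 - k < n := by omega
    have hgk := hg' (n - 1 - k) hj
    rw [hℓ] at hgk
    simp only at hgk
    have e : n - 1 - (n - 1 - k) = k := by omega
    rw [e] at hgk
    rw [dif_pos hk, Finset.mem_sdiff] at hgk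
    obtain ⟨m1, m2⟩ := hgk
    refine ⟨m1, ?_, ?_, ?_⟩
    · intro hc
      exact m2 (Finset.mem_union_right _ (Finset.mem_singleton.2 hc))
    · intro h0' hcx'
      subst h0'
      refine m2 (Finset.mem_union_left _ (Finset.mem_union_left _ ?_))
      rw [if_pos rfl]
      exact Finset.mem_singleton.2 hcx'
    · intro hl hcz'
      subst hl
      refine m2 (Finset.mem_union_left _ (Finset.mem_union_right _ ?_))
      rw [if_pos rfl]
      exact Finset.mem_singleton.2 hcz'
  refine ff_build L cx cy cz c' hxy hyz hcm hcx hcy hcz (fun i => g' (n - 1 - i))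
    (fun i h => (hmem i h).1) (fun i h => (hmem i h).2.1)
    ((hmem 0 h0n).2.2.1 rfl) ((hmem (n - 1) h1n).2.2.2 rfl) ?_
  intro i hi
  have e2 : n - 1 - i = (n - 1 - (i + 1)) + 1 := by omega
  have hlt : (n - 1 - (i + 1)) + 1 < n := by omega
  have hne := hadj' (n - 1 - (i + 1)) hlt
  rw [← e2] at hne
  exact fun e => hne e.symm

/-- main auxiliary: a non-extendable precoloring determines everything -/
private lemma ff_aux {n : ℕ} {α : Type*} [DecidableEq α]
    (hn : 1 ≤ n) (L : FFVert n → Finset α)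
    (hapex : (L FFVert.apex).card = 5)
    (hlist : ∀ i : Fin n, 3 ≤ (L (FFVert.v i)).card ∧ (L (FFVert.v i)).card ≤ 5)
    (cx cy cz : α) (hxy : cx ≠ cy) (hyz : cy ≠ cz)
    (hext : ¬ ExtendsFF L cx cy cz) :
    ({cx} : Finset α) = L (FFVert.v ⟨0, hn⟩) \ L (FFVert.v ⟨n - 1, Nat.sub_lt hn Nat.one_pos⟩) ∧
    ({cz} : Finset α) = L (FFVert.v ⟨n - 1, Nat.sub_lt hn Nat.one_pos⟩) \ L (FFVert.v ⟨0, hn⟩) ∧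
    ({cy} : Finset α) = L FFVert.apex \
      (L (FFVert.v ⟨0, hn⟩) ∪ L (FFVert.v ⟨n - 1, Nat.sub_lt hn Nat.one_pos⟩)) := by
  classical
  have h0n : (0 : ℕ) < n := by omega
  have h1n : n - 1 < n := by omega
  have hT3 : ({cx, cy, cz} : Finset α).card ≤ 3 := by
    refine le_trans (Finset.card_insert_le _ _) ?_
    have := Finset.card_insert_le cy ({cz} : Finset α)
    simp at this
    omega
  have hS2 : 2 ≤ ((L FFVert.apex) \ {cx, cy, cz}).card := by
    have hd := Finset.le_card_sdiff ({cx, cy, cz} : Finset α) (L FFVert.apex)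
    omega
  obtain ⟨s, hs, t, ht, hst⟩ := Finset.one_lt_card.1 hS2
  rw [Finset.mem_sdiff] at hs ht
  obtain ⟨hsLap, hsT⟩ := hs
  obtain ⟨htLap, htT⟩ := ht
  simp only [Finset.mem_insert, Finset.mem_singleton, not_or] at hsT htT
  obtain ⟨hsx, hsy, hsz⟩ := hsT
  obtain ⟨htx, hty, htz⟩ := htT
  rcases Nat.lt_or_ge n 2 with hn2 | hn2
  · -- n = 1 : always extendable, contradiction
    have hn1 : n = 1 := by omega
    subst hn1
    have key : ∀ c' : α, c' ∈ L FFVert.apex → c' ≠ cx → c' ≠ cy → c' ≠ cz →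
        L (FFVert.v ⟨0, h0n⟩) ⊆ {cx, cz, c'} := by
      intro c' h1 h2 h3 h4
      by_contra hsub
      obtain ⟨a, ha, hna⟩ := Finset.not_subset.1 hsub
      simp only [Finset.mem_insert, Finset.mem_singleton, not_or] at hna
      obtain ⟨hax, haz, hac⟩ := hna
      refine hext (ff_build L cx cy cz c' hxy hyz h1 h2 h3 h4 (fun _ => a)
        ?_ (fun _ _ => hac) hax haz (fun i hi => absurd hi (by omega)))
      intro i hi
      have hi0 : i = 0 := by omega
      subst hi0
      exact ha
    have hsub1 := key s hsLap hsx hsy hsz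
    have hsub2 := key t htLap htx hty htz
    have hL1sub : L (FFVert.v ⟨0, h0n⟩) ⊆ {cx, cz} := by
      intro a ha
      have u1 := hsub1 ha
      have u2 := hsub2 ha
      simp only [Finset.mem_insert, Finset.mem_singleton] at u1 u2 ⊢
      rcases u1 with h | h | h
      · exact Or.inl h
      · exact Or.inr h
      · subst h
        rcases u2 with h | h | h
        · exact absurd h hsx
        · exact absurd h hsz
        · exact absurd h hst
    have hcard2 : (({cx, cz} : Finset α)).card ≤ 2 := by
      refine le_trans (Finset.card_insert_le _ _) ?_
      simp
    have h32 : (3 : ℕ) ≤ 2 :=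
      le_trans (hlist ⟨0, h0n⟩).1 (le_trans (Finset.card_le_card hL1sub) hcard2)
    exact absurd h32 (by omega)
  · -- n ≥ 2
    have hpair : ∀ a b : α, (({a, b} : Finset α)).card ≤ 2 := by
      intro a b
      refine le_trans (Finset.card_insert_le _ _) ?_
      simp
    have key : ∀ c' : α, c' ∈ L FFVert.apex → c' ≠ cx → c' ≠ cy → c' ≠ cz →
        (cx ∈ L (FFVert.v ⟨0, h0n⟩) ∧ c' ∈ L (FFVert.v ⟨0, h0n⟩) ∧
          (L (FFVert.v ⟨0, h0n⟩)).card = 3) ∧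
        (cz ∈ L (FFVert.v ⟨n - 1, h1n⟩) ∧ c' ∈ L (FFVert.v ⟨n - 1, h1n⟩) ∧
          (L (FFVert.v ⟨n - 1, h1n⟩)).card = 3) := by
      intro c' h1 h2 h3 h4
      constructor
      · -- first list
        have hA : ¬ 2 ≤ ((L (FFVert.v ⟨0, h0n⟩)) \ {cx, c'}).card := fun h =>
          hext (ff_extend_first hn2 L (fun i => (hlist i).1) cx cy cz c'
            hxy hyz h1 h2 h3 h4 h)
        have hsi := Finset.card_sdiff_add_card_inter (L (FFVert.v ⟨0, h0n⟩)) {cx, c'}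
        have h3c := (hlist ⟨0, h0n⟩).1
        have hp := hpair cx c'
        have h2i : 2 ≤ ((L (FFVert.v ⟨0, h0n⟩)) ∩ {cx, c'}).card := by omega
        have heq : (L (FFVert.v ⟨0, h0n⟩)) ∩ {cx, c'} = {cx, c'} :=
          Finset.eq_of_subset_of_card_le Finset.inter_subset_right (le_trans hp h2i)
        have hic : ((L (FFVert.v ⟨0, h0n⟩)) ∩ {cx, c'}).card = (({cx, c'} : Finset α)).card := by
          rw [heq]
        have hcxm : cx ∈ L (FFVert.v ⟨0, h0n⟩) := by
          have : cx ∈ (L (FFVert.v ⟨0, h0n⟩)) ∩ {cx, c'} := by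
            rw [heq]; simp
          exact (Finset.mem_inter.1 this).1
        have hcm' : c' ∈ L (FFVert.v ⟨0, h0n⟩) := by
          have : c' ∈ (L (FFVert.v ⟨0, h0n⟩)) ∩ {cx, c'} := by
            rw [heq]; simp
          exact (Finset.mem_inter.1 this).1
        exact ⟨hcxm, hcm', by omega⟩
      · -- last list
        have hA : ¬ 2 ≤ ((L (FFVert.v ⟨n - 1, h1n⟩)) \ {cz, c'}).card := fun h =>
          hext (ff_extend_last hn2 L (fun i => (hlist i).1) cx cy cz c'
            hxy hyz h1 h2 h3 h4 h)
        have hsi := Finset.card_sdiff_add_card_inter (L (FFVert.v ⟨n - 1, h1n⟩)) {cz, c'}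
        have h3c := (hlist ⟨n - 1, h1n⟩).1
        have hp := hpair cz c'
        have h2i : 2 ≤ ((L (FFVert.v ⟨n - 1, h1n⟩)) ∩ {cz, c'}).card := by omega
        have heq : (L (FFVert.v ⟨n - 1, h1n⟩)) ∩ {cz, c'} = {cz, c'} :=
          Finset.eq_of_subset_of_card_le Finset.inter_subset_right (le_trans hp h2i)
        have hic : ((L (FFVert.v ⟨n - 1, h1n⟩)) ∩ {cz, c'}).card = (({cz, c'} : Finset α)).card := by
          rw [heq]
        have hczm : cz ∈ L (FFVert.v ⟨n - 1, h1n⟩) := by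
          have : cz ∈ (L (FFVert.v ⟨n - 1, h1n⟩)) ∩ {cz, c'} := by
            rw [heq]; simp
          exact (Finset.mem_inter.1 this).1
        have hcm' : c' ∈ L (FFVert.v ⟨n - 1, h1n⟩) := by
          have : c' ∈ (L (FFVert.v ⟨n - 1, h1n⟩)) ∩ {cz, c'} := by
            rw [heq]; simp
          exact (Finset.mem_inter.1 this).1
        exact ⟨hczm, hcm', by omega⟩
    obtain ⟨⟨hcxL1, hsL1, hL1card⟩, ⟨hczLn, hsLn, hLncard⟩⟩ := key s hsLap hsx hsy hsz
    obtain ⟨⟨-, htL1, -⟩, ⟨-, htLn, -⟩⟩ := key t htLap htx hty htz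
    -- L1 = {cx, s, t}
    have hstt : s ∉ ({t} : Finset α) := by simpa using hst
    have hc3 : (({cx, s, t} : Finset α)).card = 3 := by
      have hcxst : cx ∉ ({s, t} : Finset α) := by
        simp only [Finset.mem_insert, Finset.mem_singleton, not_or]
        exact ⟨fun e => hsx e.symm, fun e => htx e.symm⟩
      rw [Finset.card_insert_of_notMem hcxst, Finset.card_insert_of_notMem hstt,
        Finset.card_singleton]
    have hL1 : L (FFVert.v ⟨0, h0n⟩) = {cx, s, t} := by
      refine (Finset.eq_of_subset_of_card_le ?_ (by omega)).symm
      intro a ha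
      simp only [Finset.mem_insert, Finset.mem_singleton] at ha
      rcases ha with rfl | rfl | rfl
      · exact hcxL1
      · exact hsL1
      · exact htL1
    have hc3' : (({cz, s, t} : Finset α)).card = 3 := by
      have hczst : cz ∉ ({s, t} : Finset α) := by
        simp only [Finset.mem_insert, Finset.mem_singleton, not_or]
        exact ⟨fun e => hsz e.symm, fun e => htz e.symm⟩
      rw [Finset.card_insert_of_notMem hczst, Finset.card_insert_of_notMem hstt,
        Finset.card_singleton]
    have hLn : L (FFVert.v ⟨n - 1, h1n⟩) = {cz, s, t} := by
      refine (Finset.eq_of_subset_of_card_le ?_ (by omega)).symm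
      intro a ha
      simp only [Finset.mem_insert, Finset.mem_singleton] at ha
      rcases ha with rfl | rfl | rfl
      · exact hczLn
      · exact hsLn
      · exact htLn
    -- S ⊆ {s, t}
    have hST : (L FFVert.apex) \ {cx, cy, cz} ⊆ {s, t} := by
      intro c' hc'
      rw [Finset.mem_sdiff] at hc'
      obtain ⟨h1, h2⟩ := hc'
      simp only [Finset.mem_insert, Finset.mem_singleton, not_or] at h2
      have := (key c' h1 h2.1 h2.2.1 h2.2.2).1.2.1
      rw [hL1] at this
      simp only [Finset.mem_insert, Finset.mem_singleton] at this ⊢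
      rcases this with h | h | h
      · exact absurd h h2.1
      · exact Or.inl h
      · exact Or.inr h
    have hScard : ((L FFVert.apex) \ {cx, cy, cz}).card ≤ 2 :=
      le_trans (Finset.card_le_card hST) (hpair s t)
    have hsi2 := Finset.card_sdiff_add_card_inter (L FFVert.apex) ({cx, cy, cz} : Finset α)
    have h3i : 3 ≤ ((L FFVert.apex) ∩ {cx, cy, cz}).card := by omega
    have hTi : (L FFVert.apex) ∩ {cx, cy, cz} = {cx, cy, cz} :=
      Finset.eq_of_subset_of_card_le Finset.inter_subset_right (le_trans hT3 h3i)
    have hTsub : ({cx, cy, cz} : Finset α) ⊆ L FFVert.apex := by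
      intro a ha
      rw [← hTi] at ha
      exact (Finset.mem_inter.1 ha).1
    have hcyLap : cy ∈ L FFVert.apex := hTsub (by simp)
    have hxz : cx ≠ cz := by
      intro hcc
      have hsubT : ({cx, cy, cz} : Finset α) ⊆ {cx, cy} := by
        intro a ha
        simp only [Finset.mem_insert, Finset.mem_singleton] at ha ⊢
        rcases ha with h | h | h
        · exact Or.inl h
        · exact Or.inr h
        · exact Or.inl (h.trans hcc.symm)
      have hT2 : (({cx, cy, cz} : Finset α)).card ≤ 2 :=
        le_trans (Finset.card_le_card hsubT) (hpair cx cy)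
      have hic : ((L FFVert.apex) ∩ {cx, cy, cz}).card = (({cx, cy, cz} : Finset α)).card := by
        rw [hTi]
      omega
    -- conclusions
    refine ⟨?_, ?_, ?_⟩
    · show ({cx} : Finset α) = L (FFVert.v ⟨0, h0n⟩) \ L (FFVert.v ⟨n - 1, h1n⟩)
      rw [hL1, hLn]
      ext a
      simp only [Finset.mem_singleton, Finset.mem_sdiff, Finset.mem_insert,
        Finset.mem_singleton, not_or]
      constructor
      · rintro rfl
        exact ⟨Or.inl rfl, hxz, fun e => hsx e.symm, fun e => htx e.symm⟩
      · rintro ⟨h1 | h1 | h1, h2, h3, h4⟩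
        · exact h1
        · exact absurd h1 h3
        · exact absurd h1 h4
    · show ({cz} : Finset α) = L (FFVert.v ⟨n - 1, h1n⟩) \ L (FFVert.v ⟨0, h0n⟩)
      rw [hL1, hLn]
      ext a
      simp only [Finset.mem_singleton, Finset.mem_sdiff, Finset.mem_insert,
        Finset.mem_singleton, not_or]
      constructor
      · rintro rfl
        exact ⟨Or.inl rfl, fun e => hxz e.symm, fun e => hsz e.symm, fun e => htz e.symm⟩
      · rintro ⟨h1 | h1 | h1, h2, h3, h4⟩
        · exact h1
        · exact absurd h1 h3
        · exact absurd h1 h4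
    · show ({cy} : Finset α) = L FFVert.apex \
        (L (FFVert.v ⟨0, h0n⟩) ∪ L (FFVert.v ⟨n - 1, h1n⟩))
      ext a
      simp only [Finset.mem_singleton, Finset.mem_sdiff, Finset.mem_union]
      constructor
      · rintro rfl
        refine ⟨hcyLap, ?_⟩
        rintro (h | h)
        · rw [hL1] at h
          simp only [Finset.mem_insert, Finset.mem_singleton] at h
          rcases h with h | h | h
          · exact hxy h.symm
          · exact hsy h.symm
          · exact hty h.symm
        · rw [hLn] at h
          simp only [Finset.mem_insert, Finset.mem_singleton] at h
          rcases h with h | h | h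
          · exact hyz h
          · exact hsy h.symm
          · exact hty h.symm
      · rintro ⟨h1, h2⟩
        by_contra hne
        have hnx : a ≠ cx := fun e => h2 (Or.inl (by rw [hL1]; simp [e]))
        have hnz : a ≠ cz := fun e => h2 (Or.inr (by rw [hLn]; simp [e]))
        have haT : a ∉ ({cx, cy, cz} : Finset α) := by
          simp only [Finset.mem_insert, Finset.mem_singleton, not_or]
          exact ⟨hnx, hne, hnz⟩
        have haS : a ∈ (L FFVert.apex) \ {cx, cy, cz} := Finset.mem_sdiff.2 ⟨h1, haT⟩
        have := hST haS
        simp only [Finset.mem_insert, Finset.mem_singleton] at this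
        rcases this with rfl | rfl
        · exact h2 (Or.inl (by rw [hL1]; simp))
        · exact h2 (Or.inl (by rw [hL1]; simp))

/-- If a precoloring of the base of a fat fan does not extend, then the colors
of `x`, `z` and `y` are uniquely determined by the lists; in particular there
is at most one non-extendable precoloring. -/
theorem fatFan_nonextendable_unique {n : ℕ} {α : Type*} [DecidableEq α]
    (hn : 1 ≤ n) (L : FFVert n → Finset α)
    (hapex : (L FFVert.apex).card = 5)
    (hlist : ∀ i : Fin n, 3 ≤ (L (FFVert.v i)).card ∧ (L (FFVert.v i)).card ≤ 5)
    (cx cy cz : α) (hxy : cx ≠ cy) (hyz : cy ≠ cz)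
    (hext : ¬ ExtendsFF L cx cy cz) :
    ({cx} : Finset α) = L (FFVert.v ⟨0, by omega⟩) \ L (FFVert.v ⟨n - 1, by omega⟩) ∧
    ({cz} : Finset α) = L (FFVert.v ⟨n - 1, by omega⟩) \ L (FFVert.v ⟨0, by omega⟩) ∧
    ({cy} : Finset α) = L FFVert.apex \
      (L (FFVert.v ⟨0, by omega⟩) ∪ L (FFVert.v ⟨n - 1, by omega⟩)) ∧
    (∀ cx' cy' cz' : α, cx' ≠ cy' → cy' ≠ cz' → ¬ ExtendsFF L cx' cy' cz' →
      cx' = cx ∧ cy' = cy ∧ cz' = cz) := by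
  obtain ⟨e1, e2, e3⟩ := ff_aux hn L hapex hlist cx cy cz hxy hyz hext
  refine ⟨e1, e2, e3, ?_⟩
  intro cx' cy' cz' h1 h2 h3
  obtain ⟨f1, f2, f3⟩ := ff_aux hn L hapex hlist cx' cy' cz' h1 h2 h3
  refine ⟨?_, ?_, ?_⟩
  · have := f1.trans e1.symm
    simpa using this
  · have := f3.trans e3.symm
    simpa using this
  · have := f2.trans e2.symm
    simpa using this
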